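/- Necessity of the integrability of 1/W for linear expected resistance: if E[ξ^{-1}] < ∞, then liminf_{n→∞} E[R_n]/n ≥ E[W^{-1}]/E[ξ^{-1}] (where both sides may be infinite). In particular, E[W^{-1}] < ∞ is necessary for E[R_n] = O(n). -/

import Mathlib

open MeasureTheory ProbabilityTheory Filter Topology Asymptotics
open scoped ENNReal

noncomputable section

/-- The root of the Galton--Watson tree, seen as the empty word. -/
def root : List ℕ := []

/-- `tcount ν n x ω` is the number of descendants at relative depth `n` of the vertex `x`
in the Galton--Watson tree built from the offspring variables `ν`; thus `#T_n[x] = tcount ν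
(n - |x|) x` and `#T_n = tcount ν n root`. -/
def tcount {Ω : Type*} (ν : List ℕ → Ω → ℕ) : ℕ → List ℕ → Ω → ℕ
  | 0, _, _ => 1
  | n + 1, x, ω => ∑ i ∈ Finset.range (ν x ω), tcount ν n (x ++ [i]) ω

/-- `verts ν n ω` is the set `T_n` of vertices (words) at depth `n` of the Galton--Watson
tree. -/
def verts {Ω : Type*} (ν : List ℕ → Ω → ℕ) : ℕ → Ω → Finset (List ℕ)
  | 0, _ => {root}
  | n + 1, ω => (verts ν n ω).biUnion fun x => (Finset.range (ν x ω)).image fun i => x ++ [i]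

/-- `gwCond m ν ξ n x ω` is the rescaled effective conductance between the vertex `x` and its
descendants at relative depth `n`, defined through the series--parallel recursion
`C_1(x) = m⁻¹ ∑_{i<ν_x} ξ_{xi}⁻¹` and
`C_{n+1}(x) = m⁻¹ ∑_{i<ν_x} C_n(xi) / (1 + ξ_{xi} C_n(xi))`.
In particular `C_n = gwCond m ν ξ n root` and `R_n = (gwCond m ν ξ n root)⁻¹`. -/
def gwCond {Ω : Type*} (m : ℝ) (ν : List ℕ → Ω → ℕ) (ξ : List ℕ → Ω → ℝ) :
    ℕ → List ℕ → Ω → ℝ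
  | 0, _, _ => 0
  | 1, x, ω => m⁻¹ * ∑ i ∈ Finset.range (ν x ω), (ξ (x ++ [i]) ω)⁻¹
  | n + 2, x, ω => m⁻¹ * ∑ i ∈ Finset.range (ν x ω),
      gwCond m ν ξ (n + 1) (x ++ [i]) ω /
        (1 + ξ (x ++ [i]) ω * gwCond m ν ξ (n + 1) (x ++ [i]) ω)

/-- Codomain of the joint family gathering the offspring variables `ν_x` (indexed by
`Sum.inl x`) and the edge weights `ξ_x` (indexed by `Sum.inr x`). -/
def codom : List ℕ ⊕ List ℕ → Type
  | .inl _ => ℕ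
  | .inr _ => ℝ

instance : ∀ i, MeasurableSpace (codom i)
  | .inl _ => inferInstanceAs (MeasurableSpace ℕ)
  | .inr _ => inferInstanceAs (MeasurableSpace ℝ)

/-- The joint family of the offspring variables and the edge weights, used to state that all
these random variables are globally independent. -/
def pairFam {Ω : Type*} (ν : List ℕ → Ω → ℕ) (ξ : List ℕ → Ω → ℝ) :
    (i : List ℕ ⊕ List ℕ) → Ω → codom i
  | .inl x => ν x
  | .inr x => ξ x

section RealLemmas

lemma par_eq {x y : ℝ} (hx : 0 < x) (hy : 0 < y) :
    (x⁻¹ + y⁻¹)⁻¹ = x * y / (x + y) := by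
  rw [inv_add_inv hx.ne' hy.ne', inv_div]

lemma milne2 {u v A B : ℝ} (hu : 0 < u) (hv : 0 < v) (hA : 0 < A) (hB : 0 < B) :
    (u⁻¹ + A⁻¹)⁻¹ + (v⁻¹ + B⁻¹)⁻¹ ≤ ((u + v)⁻¹ + (A + B)⁻¹)⁻¹ := by
  rw [par_eq hu hA, par_eq hv hB, par_eq (by linarith) (by linarith)]
  rw [div_add_div _ _ (by positivity) (by positivity), div_le_div_iff₀ (by positivity) (by positivity)]
  nlinarith [sq_nonneg (u * B - v * A), mul_pos hu hv, mul_pos hA hB, mul_pos hu hB,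
    mul_pos hv hA]

lemma invsum_pos {ι : Type*} {s : Finset ι} (hs : s.Nonempty) {a : ι → ℝ}
    (ha : ∀ i ∈ s, 0 < a i) : 0 < (∑ i ∈ s, (a i)⁻¹)⁻¹ := by
  have : 0 < ∑ i ∈ s, (a i)⁻¹ :=
    Finset.sum_pos (fun i hi => inv_pos.2 (ha i hi)) hs
  positivity

lemma invsum_mono {ι : Type*} {s : Finset ι} (hs : s.Nonempty) {a b : ι → ℝ}
    (ha : ∀ i ∈ s, 0 < a i) (hab : ∀ i ∈ s, a i ≤ b i) :
    (∑ i ∈ s, (a i)⁻¹)⁻¹ ≤ (∑ i ∈ s, (b i)⁻¹)⁻¹ := by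
  have hb : ∀ i ∈ s, 0 < b i := fun i hi => lt_of_lt_of_le (ha i hi) (hab i hi)
  have h1 : 0 < ∑ i ∈ s, (b i)⁻¹ := Finset.sum_pos (fun i hi => inv_pos.2 (hb i hi)) hs
  refine inv_anti₀ h1 (Finset.sum_le_sum fun i hi => ?_)
  exact inv_anti₀ (ha i hi) (hab i hi)

lemma superadd {ι : Type*} {s : Finset ι} (hs : s.Nonempty) {a b : ι → ℝ}
    (ha : ∀ i ∈ s, 0 < a i) (hb : ∀ i ∈ s, 0 < b i) :
    (∑ i ∈ s, (a i)⁻¹)⁻¹ + (∑ i ∈ s, (b i)⁻¹)⁻¹ ≤ (∑ i ∈ s, (a i + b i)⁻¹)⁻¹ := by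
  induction hs using Finset.Nonempty.cons_induction with
  | singleton j => simp
  | cons j t hj ht IH =>
    simp only [Finset.sum_cons]
    have ha' : ∀ i ∈ t, 0 < a i := fun i hi => ha i (Finset.mem_cons_of_mem hi)
    have hb' : ∀ i ∈ t, 0 < b i := fun i hi => hb i (Finset.mem_cons_of_mem hi)
    have haj : 0 < a j := ha j (Finset.mem_cons_self j t)
    have hbj : 0 < b j := hb j (Finset.mem_cons_self j t)
    have hA : 0 < (∑ i ∈ t, (a i)⁻¹)⁻¹ := invsum_pos ht ha'
    have hB : 0 < (∑ i ∈ t, (b i)⁻¹)⁻¹ := invsum_pos ht hb'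
    have hC : 0 < (∑ i ∈ t, (a i + b i)⁻¹)⁻¹ :=
      invsum_pos ht (fun i hi => by have := ha' i hi; have := hb' i hi; linarith)
    set A := (∑ i ∈ t, (a i)⁻¹)⁻¹ with hAdef
    set B := (∑ i ∈ t, (b i)⁻¹)⁻¹ with hBdef
    set C := (∑ i ∈ t, (a i + b i)⁻¹)⁻¹ with hCdef
    have e1 : ∑ i ∈ t, (a i)⁻¹ = A⁻¹ := by rw [hAdef, inv_inv]
    have e2 : ∑ i ∈ t, (b i)⁻¹ = B⁻¹ := by rw [hBdef, inv_inv]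
    have e3 : ∑ i ∈ t, (a i + b i)⁻¹ = C⁻¹ := by rw [hCdef, inv_inv]
    rw [e1, e2, e3]
    have hIH : A + B ≤ C := IH ha' hb'
    calc ((a j)⁻¹ + A⁻¹)⁻¹ + ((b j)⁻¹ + B⁻¹)⁻¹
        ≤ ((a j + b j)⁻¹ + (A + B)⁻¹)⁻¹ := milne2 haj hbj hA hB
      _ ≤ ((a j + b j)⁻¹ + C⁻¹)⁻¹ := by
          have h1 : 0 < (a j + b j)⁻¹ + C⁻¹ := by positivity
          exact inv_anti₀ h1 (by gcongr)

lemma superadd_multi {ι κ : Type*} {s : Finset ι} (hs : s.Nonempty) {K : Finset κ}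
    (hK : K.Nonempty) {c : ι → κ → ℝ} (hc : ∀ i ∈ s, ∀ k ∈ K, 0 < c i k) :
    ∑ k ∈ K, (∑ i ∈ s, (c i k)⁻¹)⁻¹ ≤ (∑ i ∈ s, (∑ k ∈ K, c i k)⁻¹)⁻¹ := by
  induction hK using Finset.Nonempty.cons_induction with
  | singleton k => simp
  | cons k K hk hKne IH =>
    simp only [Finset.sum_cons]
    have hc' : ∀ i ∈ s, ∀ k' ∈ K, 0 < c i k' :=
      fun i hi k' hk' => hc i hi k' (Finset.mem_cons_of_mem hk')
    have hck : ∀ i ∈ s, 0 < c i k := fun i hi => hc i hi k (Finset.mem_cons_self k K)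
    have hsum : ∀ i ∈ s, 0 < ∑ k' ∈ K, c i k' :=
      fun i hi => Finset.sum_pos (fun k' hk' => hc' i hi k' hk') hKne
    calc (∑ i ∈ s, (c i k)⁻¹)⁻¹ + ∑ k' ∈ K, (∑ i ∈ s, (c i k')⁻¹)⁻¹
        ≤ (∑ i ∈ s, (c i k)⁻¹)⁻¹ + (∑ i ∈ s, (∑ k' ∈ K, c i k')⁻¹)⁻¹ := by
          gcongr; exact IH hc'
      _ ≤ (∑ i ∈ s, (c i k + ∑ k' ∈ K, c i k')⁻¹)⁻¹ := superadd hs hck hsum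

end RealLemmas

section Desc

variable {Ω : Type*}

/-- descendants of `x` at relative depth `k`. -/
def desc (ν : List ℕ → Ω → ℕ) : List ℕ → ℕ → Ω → Finset (List ℕ)
  | x, 0, _ => {x}
  | x, k + 1, ω => (Finset.range (ν x ω)).biUnion fun i => desc ν (x ++ [i]) k ω

lemma desc_succ (ν : List ℕ → Ω → ℕ) (x : List ℕ) (k : ℕ) (ω : Ω) :
    desc ν x (k + 1) ω = (Finset.range (ν x ω)).biUnion fun i => desc ν (x ++ [i]) k ω := by
  rw [desc]

lemma mem_desc (ν : List ℕ → Ω → ℕ) {y x : List ℕ} {k : ℕ} {ω : Ω} (h : y ∈ desc ν x k ω) :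
    x <+: y ∧ y.length = x.length + k := by
  induction k generalizing x with
  | zero => simp only [desc, Finset.mem_singleton] at h; subst h; simp
  | succ k IH =>
    simp only [desc, Finset.mem_biUnion, Finset.mem_range] at h
    obtain ⟨i, hi, hy⟩ := h
    obtain ⟨h1, h2⟩ := IH hy
    constructor
    · exact ((List.prefix_append x ([i])).trans h1)
    · simp only [List.length_append, List.length_cons, List.length_nil] at h2; omega

lemma desc_disjoint (ν : List ℕ → Ω → ℕ) {x : List ℕ} {k : ℕ} {ω : Ω} {i j : ℕ} (hij : i ≠ j) :
    Disjoint (desc ν (x ++ [i]) k ω) (desc ν (x ++ [j]) k ω) := by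
  rw [Finset.disjoint_left]
  intro y hy hy'
  obtain ⟨h1, h1l⟩ := mem_desc ν hy
  obtain ⟨h2, h2l⟩ := mem_desc ν hy'
  have hlen : (x ++ [i]).length = (x ++ [j]).length := by simp
  have : x ++ [i] = x ++ [j] := by
    rcases List.prefix_or_prefix_of_prefix h1 h2 with h | h
    · exact h.eq_of_length hlen
    · exact (h.eq_of_length hlen.symm).symm
  simp at this; exact hij this

lemma desc_succ_eq_biUnion (ν : List ℕ → Ω → ℕ) (x : List ℕ) (k : ℕ) (ω : Ω) :
    desc ν x (k + 1) ω =
      (desc ν x k ω).biUnion fun y => (Finset.range (ν y ω)).image fun i => y ++ [i] := by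
  induction k generalizing x with
  | zero =>
    simp only [desc]
    rw [Finset.singleton_biUnion]
    ext y
    simp [eq_comm]
  | succ k IH =>
    rw [desc_succ ν x (k+1) ω, desc_succ ν x k ω, Finset.biUnion_biUnion]
    exact Finset.biUnion_congr rfl (fun i _ => IH _)

lemma verts_eq_desc (ν : List ℕ → Ω → ℕ) (n : ℕ) (ω : Ω) : verts ν n ω = desc ν root n ω := by
  induction n with
  | zero => rfl
  | succ n IH => rw [verts, IH, desc_succ_eq_biUnion]

lemma desc_nonempty (ν : List ℕ → Ω → ℕ) {ω : Ω} (hν : ∀ y, 1 ≤ ν y ω) (x : List ℕ) (k : ℕ) :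
    (desc ν x k ω).Nonempty := by
  induction k generalizing x with
  | zero => exact ⟨x, by simp [desc]⟩
  | succ k IH =>
    obtain ⟨y, hy⟩ := IH (x ++ [0])
    refine ⟨y, ?_⟩
    simp only [desc, Finset.mem_biUnion, Finset.mem_range]
    exact ⟨0, hν x, hy⟩

lemma card_desc (ν : List ℕ → Ω → ℕ) (ω : Ω) (x : List ℕ) (k : ℕ) :
    (desc ν x k ω).card = tcount ν k x ω := by
  induction k generalizing x with
  | zero => rfl
  | succ k IH =>
    rw [desc_succ, Finset.card_biUnion]
    · exact Finset.sum_congr rfl fun i _ => IH _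
    · intro i _ j _ hij; exact desc_disjoint ν hij

/-- sum of `ξ⁻¹` over descendants. -/
def Ssum (ν : List ℕ → Ω → ℕ) (ξ : List ℕ → Ω → ℝ) (x : List ℕ) (k : ℕ) (ω : Ω) : ℝ := ∑ y ∈ desc ν x k ω, (ξ y ω)⁻¹

lemma Ssum_succ (ν : List ℕ → Ω → ℕ) (ξ : List ℕ → Ω → ℝ) (x : List ℕ) (k : ℕ) (ω : Ω) :
    Ssum ν ξ x (k + 1) ω = ∑ i ∈ Finset.range (ν x ω), Ssum ν ξ (x ++ [i]) k ω := by
  rw [Ssum, desc_succ, Finset.sum_biUnion]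
  · rfl
  · intro i _ j _ hij; exact desc_disjoint ν hij

lemma Ssum_pos (ν : List ℕ → Ω → ℕ) (ξ : List ℕ → Ω → ℝ) {ω : Ω} (hν : ∀ y, 1 ≤ ν y ω) (hξ : ∀ y, 0 < ξ y ω) (x : List ℕ) (k : ℕ) :
    0 < Ssum ν ξ x k ω :=
  Finset.sum_pos (fun y _ => inv_pos.2 (hξ y)) (desc_nonempty ν hν x k)

lemma Ssum_one (ν : List ℕ → Ω → ℕ) (ξ : List ℕ → Ω → ℝ) (x : List ℕ) (ω : Ω) :
    Ssum ν ξ x 1 ω = ∑ i ∈ Finset.range (ν x ω), (ξ (x ++ [i]) ω)⁻¹ := by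
  rw [show (1 : ℕ) = 0 + 1 from rfl, Ssum_succ]
  exact Finset.sum_congr rfl fun i _ => by rw [Ssum]; simp [desc]

end Desc

section Deterministic

variable {Ω : Type*}

lemma gwCond_one (m : ℝ) (ν : List ℕ → Ω → ℕ) (ξ : List ℕ → Ω → ℝ) (x : List ℕ) (ω : Ω) :
    gwCond m ν ξ 1 x ω = m⁻¹ * Ssum ν ξ x 1 ω := by
  rw [gwCond, Ssum_one]

lemma gwCond_two (m : ℝ) (ν : List ℕ → Ω → ℕ) (ξ : List ℕ → Ω → ℝ) (n : ℕ) (x : List ℕ)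
    (ω : Ω) :
    gwCond m ν ξ (n + 2) x ω = m⁻¹ * ∑ i ∈ Finset.range (ν x ω),
      gwCond m ν ξ (n + 1) (x ++ [i]) ω /
        (1 + ξ (x ++ [i]) ω * gwCond m ν ξ (n + 1) (x ++ [i]) ω) := by
  rw [gwCond]

/-- The deterministic Nash--Williams lower bound on the effective resistance. -/
lemma gw_bound (ν : List ℕ → Ω → ℕ) (ξ : List ℕ → Ω → ℝ) {m : ℝ} (hm : 0 < m) {ω : Ω}
    (hν : ∀ y, 1 ≤ ν y ω) (hξ : ∀ y, 0 < ξ y ω) :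
    ∀ n x, 0 < gwCond m ν ξ (n + 1) x ω ∧
      ∑ k ∈ Finset.range (n + 1), m ^ (k + 1) / Ssum ν ξ x (k + 1) ω ≤
        (gwCond m ν ξ (n + 1) x ω)⁻¹ := by
  intro n
  induction n with
  | zero =>
    intro x
    have hS : 0 < Ssum ν ξ x 1 ω := Ssum_pos ν ξ hν hξ x 1
    constructor
    · rw [gwCond_one]; positivity
    · rw [gwCond_one, mul_inv, inv_inv, Finset.sum_range_one]
      rw [div_eq_mul_inv, pow_one, mul_comm]
  | succ n IH =>
    intro x
    have hrange : (Finset.range (ν x ω)).Nonempty :=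
      ⟨0, Finset.mem_range.2 (hν x)⟩
    set C : ℕ → ℝ := fun i => gwCond m ν ξ (n + 1) (x ++ [i]) ω with hCdef
    set a : ℕ → ℝ := fun i => ξ (x ++ [i]) ω with hadef
    have hC : ∀ i, 0 < C i := fun i => (IH (x ++ [i])).1
    have ha : ∀ i, 0 < a i := fun i => hξ _
    set r : ℕ → ℝ := fun i =>
      ∑ k ∈ Finset.range (n + 1), m ^ (k + 1) / Ssum ν ξ (x ++ [i]) (k + 1) ω with hrdef
    have hr : ∀ i, 0 < r i := by
      intro i
      refine Finset.sum_pos (fun k _ => ?_) (by simp)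
      exact div_pos (by positivity) (Ssum_pos ν ξ hν hξ _ _)
    have hrC : ∀ i, r i ≤ (C i)⁻¹ := fun i => (IH (x ++ [i])).2
    -- rewrite the recursion
    have hterm : ∀ i, C i / (1 + a i * C i) = (a i + (C i)⁻¹)⁻¹ := by
      intro i
      have h1 : (0:ℝ) < 1 + a i * C i := by nlinarith [mul_pos (ha i) (hC i)]
      have h3 : a i + (C i)⁻¹ = (1 + a i * C i) / C i := by
        field_simp
        rw [add_div, mul_div_assoc, div_self (hC i).ne', mul_one, add_comm]
      rw [h3, inv_div]
    have heq : gwCond m ν ξ (n + 1 + 1) x ω =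
        m⁻¹ * ∑ i ∈ Finset.range (ν x ω), (a i + (C i)⁻¹)⁻¹ := by
      rw [gwCond_two]
      exact congrArg (m⁻¹ * ·) (Finset.sum_congr rfl fun i _ => hterm i)
    have hTpos : 0 < ∑ i ∈ Finset.range (ν x ω), (a i + (C i)⁻¹)⁻¹ :=
      Finset.sum_pos (fun i _ => by have := hC i; have := ha i; positivity) hrange
    constructor
    · rw [heq]; positivity
    · rw [heq, mul_inv, inv_inv]
      -- m * T⁻¹ with T = ∑ (a i + (C i)⁻¹)⁻¹
      have step1 : (∑ i ∈ Finset.range (ν x ω), (a i + r i)⁻¹)⁻¹ ≤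
          (∑ i ∈ Finset.range (ν x ω), (a i + (C i)⁻¹)⁻¹)⁻¹ := by
        refine invsum_mono hrange (fun i _ => by have := ha i; have := hr i; positivity)
          (fun i _ => by have := hrC i; linarith)
      have step2 : (∑ i ∈ Finset.range (ν x ω), (a i)⁻¹)⁻¹ +
            (∑ i ∈ Finset.range (ν x ω), (r i)⁻¹)⁻¹ ≤
          (∑ i ∈ Finset.range (ν x ω), (a i + r i)⁻¹)⁻¹ :=
        superadd hrange (fun i _ => ha i) (fun i _ => hr i)
      have step3 : ∑ k ∈ Finset.range (n + 1),
            (∑ i ∈ Finset.range (ν x ω), (m ^ (k + 1) / Ssum ν ξ (x ++ [i]) (k + 1) ω)⁻¹)⁻¹ ≤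
          (∑ i ∈ Finset.range (ν x ω), (r i)⁻¹)⁻¹ := by
        refine superadd_multi hrange (by simp) (fun i _ k _ => ?_)
        exact div_pos (by positivity) (Ssum_pos ν ξ hν hξ _ _)
      -- identify the inner parallel sums
      have hinner : ∀ k, (∑ i ∈ Finset.range (ν x ω),
            (m ^ (k + 1) / Ssum ν ξ (x ++ [i]) (k + 1) ω)⁻¹)⁻¹ =
          m ^ (k + 1) / Ssum ν ξ x (k + 2) ω := by
        intro k
        have h1 : ∀ i, (m ^ (k + 1) / Ssum ν ξ (x ++ [i]) (k + 1) ω)⁻¹ =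
            Ssum ν ξ (x ++ [i]) (k + 1) ω / m ^ (k + 1) := by
          intro i; rw [inv_div]
        rw [Finset.sum_congr rfl fun i _ => h1 i, ← Finset.sum_div,
          ← Ssum_succ, inv_div]
      have ha1 : (∑ i ∈ Finset.range (ν x ω), (a i)⁻¹)⁻¹ = (Ssum ν ξ x 1 ω)⁻¹ := by
        rw [Ssum_one]
      -- put everything together
      have key : m / Ssum ν ξ x 1 ω +
            ∑ k ∈ Finset.range (n + 1), m * (m ^ (k + 1) / Ssum ν ξ x (k + 2) ω) ≤
          m * (∑ i ∈ Finset.range (ν x ω), (a i + (C i)⁻¹)⁻¹)⁻¹ := by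
        rw [← Finset.mul_sum, div_eq_mul_inv, ← mul_add]
        refine mul_le_mul_of_nonneg_left ?_ hm.le
        calc (Ssum ν ξ x 1 ω)⁻¹ + ∑ k ∈ Finset.range (n + 1),
              m ^ (k + 1) / Ssum ν ξ x (k + 2) ω
            = (∑ i ∈ Finset.range (ν x ω), (a i)⁻¹)⁻¹ + ∑ k ∈ Finset.range (n + 1),
              (∑ i ∈ Finset.range (ν x ω),
                (m ^ (k + 1) / Ssum ν ξ (x ++ [i]) (k + 1) ω)⁻¹)⁻¹ := by
              rw [ha1, Finset.sum_congr rfl fun k _ => (hinner k).symm]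
          _ ≤ (∑ i ∈ Finset.range (ν x ω), (a i)⁻¹)⁻¹ +
              (∑ i ∈ Finset.range (ν x ω), (r i)⁻¹)⁻¹ := add_le_add le_rfl step3
          _ ≤ (∑ i ∈ Finset.range (ν x ω), (a i + r i)⁻¹)⁻¹ := step2
          _ ≤ _ := step1
      refine le_trans (le_of_eq ?_) key
      rw [Finset.sum_range_succ', add_comm]
      congr 1
      · norm_num
      · refine Finset.sum_congr rfl fun k _ => ?_
        show m ^ (k + 2) / Ssum ν ξ x (k + 2) ω = m * (m ^ (k + 1) / Ssum ν ξ x (k + 2) ω)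
        ring

end Deterministic

section Meas

variable {Ω : Type*}

lemma fiber_const {κ : Type*} {m' : MeasurableSpace Ω} (c t : κ) :
    MeasurableSet[m'] {ω : Ω | c = t} := by
  by_cases h : c = t
  · simp only [h, Set.setOf_true]; exact MeasurableSet.univ
  · simp only [h, Set.setOf_false]; exact MeasurableSet.empty

lemma fiber_comp {ι κ : Type*} [Countable ι] {m' : MeasurableSpace Ω}
    (V : Ω → ι) (hV : ∀ i, MeasurableSet[m'] {ω | V ω = i}) (G : ι → Ω → κ)
    (hG : ∀ i t, MeasurableSet[m'] {ω | G i ω = t}) :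
    ∀ t, MeasurableSet[m'] {ω | G (V ω) ω = t} := by
  intro t
  have h : {ω | G (V ω) ω = t} = ⋃ i, ({ω | V ω = i} ∩ {ω | G i ω = t}) := by
    ext ω
    simp only [Set.mem_setOf_eq, Set.mem_iUnion, Set.mem_inter_iff]
    exact ⟨fun h => ⟨V ω, rfl, h⟩, fun ⟨i, hi, h⟩ => hi ▸ h⟩
  rw [h]
  exact MeasurableSet.iUnion fun i => (hV i).inter (hG i t)

lemma measurable_comp_countable {ι β : Type*} [Countable ι] [MeasurableSpace β]
    {m' : MeasurableSpace Ω}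
    (V : Ω → ι) (hV : ∀ i, MeasurableSet[m'] {ω | V ω = i}) (F : ι → Ω → β)
    (hF : ∀ i, Measurable[m'] (F i)) : Measurable[m'] fun ω => F (V ω) ω := by
  intro A hA
  have h : (fun ω => F (V ω) ω) ⁻¹' A = ⋃ i, ({ω | V ω = i} ∩ F i ⁻¹' A) := by
    ext ω
    simp only [Set.mem_preimage, Set.mem_iUnion, Set.mem_inter_iff, Set.mem_setOf_eq]
    exact ⟨fun h => ⟨V ω, rfl, h⟩, fun ⟨i, hi, h⟩ => hi ▸ h⟩
  rw [h]
  exact MeasurableSet.iUnion fun i => (hV i).inter (hF i hA)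

variable (ν : List ℕ → Ω → ℕ)

/-- measurability of the fibers of the level sets of the GW tree, w.r.t. any σ-algebra making
the offspring numbers measurable. -/
lemma verts_fiber {m' : MeasurableSpace Ω}
    (hν : ∀ x n, MeasurableSet[m'] {ω | ν x ω = n}) (k : ℕ) :
    ∀ t, MeasurableSet[m'] {ω | verts ν k ω = t} := by
  induction k with
  | zero => intro t; exact fiber_const _ _
  | succ k IH =>
    have hstep : ∀ (s : Finset (List ℕ)) (t : Finset (List ℕ)),
        MeasurableSet[m'] {ω | (s.biUnion fun x =>
          (Finset.range (ν x ω)).image fun i => x ++ [i]) = t} := by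
      intro s
      induction s using Finset.induction_on with
      | empty => intro t; simpa using fiber_const (∅ : Finset (List ℕ)) t
      | @insert x s hx IHs =>
        intro t
        have : ∀ ω, ((insert x s).biUnion fun y =>
            (Finset.range (ν y ω)).image fun i => y ++ [i]) =
            ((Finset.range (ν x ω)).image fun i => x ++ [i]) ∪
              (s.biUnion fun y => (Finset.range (ν y ω)).image fun i => y ++ [i]) := by
          intro ω; rw [Finset.biUnion_insert]
        simp only [this]
        exact fiber_comp (fun ω => ν x ω) (hν x)
          (fun n ω => ((Finset.range n).image fun i => x ++ [i]) ∪
            (s.biUnion fun y => (Finset.range (ν y ω)).image fun i => y ++ [i]))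
          (fun n => fiber_comp (fun ω => s.biUnion fun y =>
              (Finset.range (ν y ω)).image fun i => y ++ [i]) IHs
            (fun v _ω => ((Finset.range n).image fun i => x ++ [i]) ∪ v)
            (fun v t' => fiber_const _ _)) t
    intro t
    exact fiber_comp (fun ω => verts ν k ω) IH
      (fun s ω => s.biUnion fun x => (Finset.range (ν x ω)).image fun i => x ++ [i])
      hstep t

variable [MeasurableSpace Ω] (ξ : List ℕ → Ω → ℝ)

lemma measurable_sum_range {f : ℕ → Ω → ℝ} (hf : ∀ i, Measurable (f i))
    (hν : ∀ x, Measurable (ν x)) (x : List ℕ) :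
    Measurable fun ω => ∑ i ∈ Finset.range (ν x ω), f i ω :=
  measurable_comp_countable (fun ω => ν x ω)
    (fun n => (hν x) (measurableSet_singleton n))
    (fun n ω => ∑ i ∈ Finset.range n, f i ω)
    (fun n => Finset.measurable_sum _ fun i _ => hf i)

lemma measurable_gwCond (m : ℝ) (hν : ∀ x, Measurable (ν x)) (hξ : ∀ x, Measurable (ξ x)) :
    ∀ n x, Measurable fun ω => gwCond m ν ξ n x ω := by
  have key : ∀ n, ∀ x, Measurable fun ω => gwCond m ν ξ (n + 1) x ω := by
    intro n
    induction n with
    | zero =>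
      intro x
      have : ∀ ω, gwCond m ν ξ 1 x ω =
          m⁻¹ * ∑ i ∈ Finset.range (ν x ω), (ξ (x ++ [i]) ω)⁻¹ := fun ω => by rw [gwCond]
      simp only [this]
      exact (measurable_sum_range ν (fun i => (hξ (x ++ [i])).inv) hν x).const_mul _
    | succ n IH =>
      intro x
      have : ∀ ω, gwCond m ν ξ (n + 2) x ω = m⁻¹ * ∑ i ∈ Finset.range (ν x ω),
          gwCond m ν ξ (n + 1) (x ++ [i]) ω /
            (1 + ξ (x ++ [i]) ω * gwCond m ν ξ (n + 1) (x ++ [i]) ω) := fun ω => by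
        rw [gwCond]
      simp only [this]
      refine (measurable_sum_range ν (fun i => ?_) hν x).const_mul _
      exact (IH (x ++ [i])).div (((hξ (x ++ [i])).mul (IH (x ++ [i]))).const_add 1)
  intro n
  match n with
  | 0 => simpa [gwCond] using measurable_const
  | n + 1 => exact key n

end Meas

section Jensen

lemma ennreal_tangent {x c : ℝ≥0∞} (hc0 : c ≠ 0) (hct : c ≠ ∞) :
    2 / c ≤ x⁻¹ + x / (c * c) := by
  rcases eq_or_ne x 0 with rfl | hx0
  · simp
  rcases eq_or_ne x ∞ with rfl | hxt
  · have h : (∞ : ℝ≥0∞) / (c * c) = ∞ := ENNReal.top_div_of_ne_top (ENNReal.mul_ne_top hct hct)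
    rw [h]; simp
  lift x to NNReal using hxt
  lift c to NNReal using hct
  have hx0' : x ≠ 0 := by simpa using hx0
  have hc0' : c ≠ 0 := by simpa using hc0
  have hx : (0:ℝ) < x := by positivity
  have hc : (0:ℝ) < c := by positivity
  have h2 : (2:ℝ≥0∞) / (c:ℝ≥0∞) = ((2 / c : NNReal) : ℝ≥0∞) := by
    rw [ENNReal.coe_div hc0']; norm_cast
  have h3 : ((x:ℝ≥0∞))⁻¹ + (x:ℝ≥0∞) / ((c:ℝ≥0∞) * (c:ℝ≥0∞)) =
      ((x⁻¹ + x / (c * c) : NNReal) : ℝ≥0∞) := by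
    rw [ENNReal.coe_add, ENNReal.coe_div (mul_ne_zero hc0' hc0'), ENNReal.coe_inv hx0',
      ENNReal.coe_mul]
  rw [h2, h3, ENNReal.coe_le_coe, ← NNReal.coe_le_coe]
  push_cast
  rw [inv_eq_one_div, div_add_div _ _ (ne_of_gt hx) (by positivity),
    div_le_div_iff₀ hc (by positivity)]
  nlinarith [sq_nonneg ((x:ℝ) - c), mul_pos hx hc]

lemma lintegral_inv_ge {Ω : Type*} [MeasurableSpace Ω] (P : Measure Ω)
    [IsProbabilityMeasure P] {h : Ω → ℝ≥0∞} (hm : AEMeasurable h P) :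
    (∫⁻ ω, h ω ∂P)⁻¹ ≤ ∫⁻ ω, (h ω)⁻¹ ∂P := by
  set c := ∫⁻ ω, h ω ∂P with hc
  rcases eq_or_ne c 0 with hc0 | hc0
  · have hz : h =ᵐ[P] 0 := (lintegral_eq_zero_iff' hm).1 hc0
    have : ∫⁻ ω, (h ω)⁻¹ ∂P = ∫⁻ _ω, (∞ : ℝ≥0∞) ∂P := by
      refine lintegral_congr_ae (hz.mono fun ω hω => ?_)
      simp [hω]
    rw [this]
    simp [lintegral_const]
  rcases eq_or_ne c ∞ with hct | hct
  · rw [hct]; simp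
  have key : 2 / c ≤ (∫⁻ ω, (h ω)⁻¹ ∂P) + 1 / c := by
    have h1 : 2 / c = ∫⁻ _ω, 2 / c ∂P := by simp [lintegral_const]
    rw [h1]
    have h2 : ∫⁻ ω, ((h ω)⁻¹ + h ω / (c * c)) ∂P =
        (∫⁻ ω, (h ω)⁻¹ ∂P) + ∫⁻ ω, h ω / (c * c) ∂P :=
      lintegral_add_left' hm.inv _
    have h3 : ∫⁻ ω, h ω / (c * c) ∂P = 1 / c := by
      simp_rw [div_eq_mul_inv]
      rw [lintegral_mul_const'' _ hm, ← hc]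
      rw [ENNReal.mul_inv (Or.inl hc0) (Or.inl hct), ← mul_assoc,
        ENNReal.mul_inv_cancel hc0 hct, one_mul]
    calc ∫⁻ _ω, 2 / c ∂P ≤ ∫⁻ ω, ((h ω)⁻¹ + h ω / (c * c)) ∂P :=
          lintegral_mono fun ω => ennreal_tangent hc0 hct
      _ = _ := by rw [h2, h3]
  have h4 : (∫⁻ ω, (h ω)⁻¹ ∂P) + 1 / c - 1 / c ≤ ∫⁻ ω, (h ω)⁻¹ ∂P := by
    rw [ENNReal.add_sub_cancel_right (by simp [hc0])]
  refine le_trans ?_ (le_trans (tsub_le_tsub_right key _) h4)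
  rw [show (2:ℝ≥0∞) = 1 + 1 by norm_num, ← ENNReal.div_add_div_same,
    ENNReal.add_sub_cancel_right (by simp [hc0]), one_div]

end Jensen

section Liminf

lemma liminf_mul_const_le (v : ℕ → ℝ≥0∞) (c : ℝ≥0∞) :
    (atTop.liminf v) * c ≤ atTop.liminf fun n => v n * c := by
  rw [liminf_eq_iSup_iInf_of_nat, liminf_eq_iSup_iInf_of_nat, ENNReal.iSup_mul]
  refine iSup_mono fun n => ?_
  refine le_iInf₂ fun i hi => ?_
  exact mul_le_mul_left (iInf₂_le i hi) c

lemma tendsto_sub_div (K : ℕ) :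
    Tendsto (fun n : ℕ => ((n - K : ℕ) : ℝ≥0∞) / n) atTop (𝓝 1) := by
  have hreal : Tendsto (fun n : ℕ => ((n - K : ℕ) : ℝ) / (n : ℝ)) atTop (𝓝 1) := by
    have h1 : Tendsto (fun n : ℕ => 1 - (K : ℝ) / n) atTop (𝓝 1) := by
      simpa using tendsto_const_nhds.sub (tendsto_const_div_atTop_nhds_zero_nat (K : ℝ))
    refine h1.congr' ?_
    filter_upwards [eventually_ge_atTop K, eventually_ge_atTop 1] with n hn h1n
    have hn0 : (n : ℝ) ≠ 0 := by positivity
    rw [Nat.cast_sub hn, sub_div, div_self hn0]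
  have h2 := ENNReal.tendsto_ofReal hreal
  rw [ENNReal.ofReal_one] at h2
  refine h2.congr' ?_
  filter_upwards [eventually_ge_atTop 1] with n hn
  have hn0 : (0 : ℝ) < n := by positivity
  rw [ENNReal.ofReal_div_of_pos hn0, ENNReal.ofReal_natCast, ENNReal.ofReal_natCast]

lemma cesaro_liminf (v : ℕ → ℝ≥0∞) :
    atTop.liminf v ≤ atTop.liminf fun n => (∑ k ∈ Finset.range n, v k) / n := by
  rw [le_liminf_iff]
  intro b hb
  obtain ⟨b', hbb', hb'⟩ := exists_between hb
  obtain ⟨K, hK⟩ := eventually_atTop.1 (eventually_lt_of_lt_liminf hb')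
  have hsum : ∀ n, ((n - K : ℕ) : ℝ≥0∞) * b' ≤ ∑ k ∈ Finset.range n, v k := by
    intro n
    calc ((n - K : ℕ) : ℝ≥0∞) * b' = (Finset.Ico K n).card • b' := by
          rw [Nat.card_Ico, nsmul_eq_mul]
      _ ≤ ∑ k ∈ Finset.Ico K n, v k :=
          Finset.card_nsmul_le_sum _ _ _ fun k hk => (hK k (Finset.mem_Ico.1 hk).1).le
      _ ≤ ∑ k ∈ Finset.range n, v k :=
          Finset.sum_le_sum_of_subset fun k hk => Finset.mem_range.2 (Finset.mem_Ico.1 hk).2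
  have hT : Tendsto (fun n : ℕ => b' * (((n - K : ℕ) : ℝ≥0∞) / n)) atTop (𝓝 b') := by
    have h := ENNReal.Tendsto.const_mul (a := b') (tendsto_sub_div K) (Or.inl one_ne_zero)
    rwa [mul_one] at h
  filter_upwards [hT.eventually (eventually_gt_nhds hbb'), eventually_ge_atTop 1] with n hn hn1
  refine hn.trans_le ?_
  calc b' * (((n - K : ℕ) : ℝ≥0∞) / n) = ((n - K : ℕ) : ℝ≥0∞) * b' / n := by
        rw [← mul_div_assoc, mul_comm]
    _ ≤ (∑ k ∈ Finset.range n, v k) / n := ENNReal.div_le_div_right (hsum n) _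

end Liminf

def sigmaFam {Ω β : Type*} [MeasurableSpace β] (f : List ℕ → Ω → β) : MeasurableSpace Ω :=
  ⨆ x : List ℕ, MeasurableSpace.comap (f x) inferInstance

section Partition

lemma lintegral_partition {Ω : Type*} [MeasurableSpace Ω] (P : Measure Ω)
    (ν : List ℕ → Ω → ℕ) (hν : ∀ x, Measurable (ν x)) (j : ℕ) (f : Ω → ℝ≥0∞)
    (hf : Measurable f) :
    ∫⁻ ω, f ω ∂P =
      ∑' t : Finset (List ℕ), ∫⁻ ω, ({ω' | verts ν j ω' = t}).indicator f ω ∂P := by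
  have hfib := verts_fiber ν (fun x n => (hν x) (measurableSet_singleton n)) j
  have hpt : ∀ ω, f ω = ∑' t : Finset (List ℕ), ({ω' | verts ν j ω' = t}).indicator f ω := by
    intro ω
    rw [tsum_eq_single (verts ν j ω) ?_]
    · rw [Set.indicator_of_mem (by exact rfl)]
    · intro t ht
      refine Set.indicator_of_notMem (fun h => ht ?_) f
      exact (Set.mem_setOf_eq ▸ h).symm ▸ rfl
  rw [lintegral_congr hpt]
  exact lintegral_tsum fun t => (hf.indicator (hfib t)).aemeasurable

end Partition

/-- Necessity of the integrability of `1/W`: `liminf E[R_n]/n ≥ E[W⁻¹]/E[ξ⁻¹]` (both sides possibly infinite). -/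
theorem inverse_W_necessary
    {Ω : Type*} [MeasurableSpace Ω] (P : Measure Ω) [IsProbabilityMeasure P]
    -- the offspring variables `ν_x` and the edge weights `ξ_x`
    (ν : List ℕ → Ω → ℕ) (ξ : List ℕ → Ω → ℝ)
    (hmν : ∀ x, Measurable (ν x)) (hmξ : ∀ x, Measurable (ξ x))
    -- the two families are i.i.d. and globally independent
    (hindep : iIndepFun (pairFam ν ξ) P)
    (hidν : ∀ x, IdentDistrib (ν x) (ν root) P P)
    (hidξ : ∀ x, IdentDistrib (ξ x) (ξ root) P P)
    -- `ν` takes values in the positive integers and `ξ` is strictly positive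
    (hνpos : ∀ x, ∀ᵐ ω ∂P, 0 < ν x ω)
    (hξpos : ∀ x, ∀ᵐ ω ∂P, 0 < ξ x ω)
    -- the mean offspring number `m = E[ν]` satisfies `1 < m`
    (hνint : Integrable (fun ω => (ν root ω : ℝ)) P)
    (m : ℝ) (hm : m = ∫ ω, (ν root ω : ℝ) ∂P) (hm1 : 1 < m)
    (hξinv : Integrable (fun ω => (ξ root ω)⁻¹) P)
    -- `W` is the a.s. limit of the martingale `W_n = m⁻ⁿ #T_n`
    (W : Ω → ℝ)
    (hW : ∀ᵐ ω ∂P, Tendsto (fun n => (m ^ n)⁻¹ * (tcount ν n root ω : ℝ)) atTop (𝓝 (W ω)))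
    :
    (∫⁻ ω, ENNReal.ofReal ((W ω)⁻¹) ∂P) / ENNReal.ofReal (∫ ω, (ξ root ω)⁻¹ ∂P) ≤
      atTop.liminf
        fun n : ℕ => (∫⁻ ω, ENNReal.ofReal ((gwCond m ν ξ n root ω)⁻¹) ∂P) / (n : ℝ≥0∞) := by
  classical
  have hm0 : (0:ℝ) < m := lt_trans one_pos hm1
  -- good events
  have hνpos1 : ∀ᵐ ω ∂P, ∀ x, 1 ≤ ν x ω := ae_all_iff.2 fun x => (hνpos x).mono fun ω h => h
  have hξpos' : ∀ᵐ ω ∂P, ∀ x, 0 < ξ x ω := ae_all_iff.2 hξpos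
  -- the denominator
  set D' : ℝ≥0∞ := ∫⁻ ω, ENNReal.ofReal ((ξ root ω)⁻¹) ∂P with hD'
  have hDD : ENNReal.ofReal (∫ ω, (ξ root ω)⁻¹ ∂P) = D' :=
    MeasureTheory.ofReal_integral_eq_lintegral_ofReal hξinv
      ((hξpos root).mono fun ω h => (inv_pos.2 h).le)
  have hD'top : D' ≠ ∞ := by rw [← hDD]; exact ENNReal.ofReal_ne_top
  have hD'0 : D' ≠ 0 := by
    intro h0
    rw [hD', lintegral_eq_zero_iff' (f := fun ω => ENNReal.ofReal ((ξ root ω)⁻¹))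
      (((hmξ root).inv.ennreal_ofReal).aemeasurable)] at h0
    obtain ⟨ω, h1, h2⟩ := ((hξpos root).and h0).exists
    simp only [Pi.zero_apply, ENNReal.ofReal_eq_zero] at h2
    exact absurd h2 (not_le.2 (inv_pos.2 h1))
  -- measurability of the level sums
  have hfib : ∀ j t, MeasurableSet {ω | verts ν j ω = t} :=
    fun j => verts_fiber ν (fun x n => (hmν x) (measurableSet_singleton n)) j
  have hSj : ∀ j, Measurable fun ω => Ssum ν ξ root j ω := by
    intro j
    have h : ∀ ω, Ssum ν ξ root j ω = ∑ y ∈ verts ν j ω, (ξ y ω)⁻¹ := fun ω => by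
      rw [Ssum, ← verts_eq_desc]
    simp only [h]
    exact measurable_comp_countable (fun ω => verts ν j ω) (hfib j)
      (fun t ω => ∑ y ∈ t, (ξ y ω)⁻¹)
      (fun t => Finset.measurable_sum _ fun y _ => (hmξ y).inv)
  have htc : ∀ j, Measurable fun ω => (tcount ν j root ω : ℝ) := by
    intro j
    have h : ∀ ω, (tcount ν j root ω : ℝ) = ((verts ν j ω).card : ℝ) := fun ω => by
      rw [verts_eq_desc, card_desc]
    simp only [h]
    exact measurable_comp_countable (fun ω => verts ν j ω) (hfib j)
      (fun t _ => ((t.card : ℕ) : ℝ)) (fun t => measurable_const)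
  -- the two sequences of integrals
  set Tj : ℕ → ℝ≥0∞ := fun j => ∫⁻ ω, ENNReal.ofReal (m ^ j / Ssum ν ξ root j ω) ∂P with hTj
  set Bj : ℕ → ℝ≥0∞ :=
    fun j => ∫⁻ ω, ENNReal.ofReal (((m ^ j)⁻¹ * (tcount ν j root ω : ℝ))⁻¹) ∂P with hBj
  have hTmeas : ∀ j, Measurable fun ω => ENNReal.ofReal (m ^ j / Ssum ν ξ root j ω) :=
    fun j => (measurable_const.div (hSj j)).ennreal_ofReal
  have hBmeas : ∀ j, Measurable fun ω =>
      ENNReal.ofReal (((m ^ j)⁻¹ * (tcount ν j root ω : ℝ))⁻¹) :=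
    fun j => (((htc j).const_mul _).inv).ennreal_ofReal
  -- Step I : ∑_{k<n} T_{k+1} ≤ E[R_n]
  have stepI : ∀ n : ℕ, ∑ k ∈ Finset.range n, Tj (k + 1) ≤
      ∫⁻ ω, ENNReal.ofReal ((gwCond m ν ξ n root ω)⁻¹) ∂P := by
    intro n
    rw [hTj, ← lintegral_finset_sum _ (fun k _ => hTmeas (k + 1))]
    refine lintegral_mono_ae ?_
    filter_upwards [hνpos1, hξpos'] with ω h1 h2
    cases n with
    | zero => simp
    | succ n' =>
      have hb := (gw_bound ν ξ hm0 h1 h2 n' root).2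
      calc ∑ k ∈ Finset.range (n' + 1), ENNReal.ofReal (m ^ (k+1) / Ssum ν ξ root (k+1) ω)
          = ENNReal.ofReal (∑ k ∈ Finset.range (n' + 1), m ^ (k+1) / Ssum ν ξ root (k+1) ω) :=
            (ENNReal.ofReal_sum_of_nonneg fun k _ =>
              div_nonneg (by positivity) (Ssum_pos ν ξ h1 h2 _ _).le).symm
        _ ≤ ENNReal.ofReal ((gwCond m ν ξ (n' + 1) root ω)⁻¹) :=
            ENNReal.ofReal_le_ofReal hb
  -- independence of the ν and ξ σ-algebras
  have hpairmeas : ∀ i, Measurable (pairFam ν ξ i) := by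
    rintro (x | x)
    · exact hmν x
    · exact hmξ x
  have hGνle : sigmaFam ν ≤ ‹MeasurableSpace Ω› := iSup_le fun x => (hmν x).comap_le
  have hGξle : sigmaFam ξ ≤ ‹MeasurableSpace Ω› := iSup_le fun x => (hmξ x).comap_le
  have hIndep : Indep (sigmaFam ν) (sigmaFam ξ) P := by
    have hdisj : Disjoint (Set.range (Sum.inl : List ℕ → List ℕ ⊕ List ℕ))
        (Set.range (Sum.inr : List ℕ → List ℕ ⊕ List ℕ)) := by
      rw [Set.disjoint_left]
      rintro _ ⟨x, rfl⟩ ⟨y, h⟩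
      cases h
    have h := ProbabilityTheory.indep_iSup_of_disjoint
      (m := fun i => MeasurableSpace.comap (pairFam ν ξ i) inferInstance)
      (fun i => (hpairmeas i).comap_le) hindep.iIndep hdisj
    rw [iSup_range, iSup_range] at h
    exact h
  have hνG : ∀ x n, MeasurableSet[sigmaFam ν] {ω | ν x ω = n} := by
    intro x n
    have h1 : MeasurableSet[MeasurableSpace.comap (ν x) inferInstance] {ω | ν x ω = n} :=
      ⟨{n}, measurableSet_singleton n, rfl⟩
    exact le_iSup (fun x => MeasurableSpace.comap (ν x) inferInstance) x _ h1
  have hξG : ∀ x, Measurable[sigmaFam ξ] (ξ x) := fun x =>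
    Measurable.of_comap_le (le_iSup (fun x => MeasurableSpace.comap (ξ x) inferInstance) x)
  have hfibG : ∀ j t, MeasurableSet[sigmaFam ν] {ω | verts ν j ω = t} :=
    fun j => verts_fiber ν hνG j
  -- the common value of ∫⁻ ofReal (ξ x⁻¹)
  have hxD : ∀ x : List ℕ, ∫⁻ ω, ENNReal.ofReal ((ξ x ω)⁻¹) ∂P = D' := by
    intro x
    have hφ : Measurable fun r : ℝ => ENNReal.ofReal r⁻¹ :=
      ENNReal.measurable_ofReal.comp measurable_inv
    rw [hD']
    calc ∫⁻ ω, ENNReal.ofReal ((ξ x ω)⁻¹) ∂P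
        = ∫⁻ r, ENNReal.ofReal r⁻¹ ∂(P.map (ξ x)) := (lintegral_map hφ (hmξ x)).symm
      _ = ∫⁻ r, ENNReal.ofReal r⁻¹ ∂(P.map (ξ root)) := by rw [(hidξ x).map_eq]
      _ = _ := lintegral_map hφ (hmξ root)
  -- Step II : B_j / D' ≤ T_j for every j
  have stepII : ∀ j : ℕ, Bj j * D'⁻¹ ≤ Tj j := by
    intro j
    have hTeq : Tj j = ∑' t : Finset (List ℕ), ∫⁻ ω,
        ({ω' | verts ν j ω' = t}).indicator
          (fun ω => ENNReal.ofReal (m ^ j / Ssum ν ξ root j ω)) ω ∂P :=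
      lintegral_partition P ν hmν j _ (hTmeas j)
    have hBeq : Bj j = ∑' t : Finset (List ℕ), ∫⁻ ω,
        ({ω' | verts ν j ω' = t}).indicator
          (fun ω => ENNReal.ofReal (((m ^ j)⁻¹ * (tcount ν j root ω : ℝ))⁻¹)) ω ∂P :=
      lintegral_partition P ν hmν j _ (hBmeas j)
    rw [hTeq, hBeq, ← ENNReal.tsum_mul_right]
    refine ENNReal.tsum_le_tsum fun t => ?_
    rcases t.eq_empty_or_nonempty with rfl | htne
    · -- the empty level has zero probability
      have hnull : P {ω | verts ν j ω = ∅} = 0 := by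
        refine measure_eq_zero_iff_ae_notMem.2 ?_
        refine hνpos1.mono fun ω h1 h2 => ?_
        have hne := desc_nonempty ν h1 root j
        rw [← verts_eq_desc] at hne
        rw [Set.mem_setOf_eq] at h2
        rw [h2] at hne
        exact absurd hne (by simp)
      rw [lintegral_indicator (hfib j ∅), setLIntegral_measure_zero _ _ hnull, zero_mul]
      exact zero_le
    · -- a nonempty level: Jensen + independence
      set E : Set Ω := {ω | verts ν j ω = t} with hE
      set Y : Ω → ℝ := fun ω => ∑ x ∈ t, (ξ x ω)⁻¹ with hY
      set g : Ω → ℝ≥0∞ := fun ω => (ENNReal.ofReal (Y ω))⁻¹ with hg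
      have hYmeas : Measurable Y := Finset.measurable_sum _ fun y _ => (hmξ y).inv
      have hcard0 : ((t.card : ℕ) : ℝ) ≠ 0 := by
        simpa using Finset.card_ne_zero_of_mem htne.choose_spec
      have hcardpos : (0:ℝ) < ((t.card : ℕ) : ℝ) := by
        exact_mod_cast Finset.card_pos.2 htne
      have hcardE : ((t.card : ℕ) : ℝ≥0∞) ≠ 0 := Nat.cast_ne_zero.2 (Finset.card_pos.2 htne).ne'
      have hgG : Measurable[sigmaFam ξ] g := by
        refine Measurable.inv ?_
        refine Measurable.ennreal_ofReal ?_
        exact Finset.measurable_sum _ fun y _ => (hξG y).inv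
      have hQ1 : (∫⁻ ω, E.indicator
            (fun ω => ENNReal.ofReal (m ^ j / Ssum ν ξ root j ω)) ω ∂P)
          = ∫⁻ ω, (E.indicator (fun _ => ENNReal.ofReal (m ^ j)) ω) * g ω ∂P := by
        refine lintegral_congr_ae ?_
        filter_upwards [hξpos'] with ω hξω
        by_cases hEω : ω ∈ E
        · rw [Set.indicator_of_mem hEω, Set.indicator_of_mem hEω]
          have hYS : Ssum ν ξ root j ω = Y ω := by
            rw [Ssum, ← verts_eq_desc, show verts ν j ω = t from hEω]
          have hY0 : 0 < Y ω := Finset.sum_pos (fun x _ => inv_pos.2 (hξω x)) htne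
          rw [hYS, ENNReal.ofReal_div_of_pos hY0, div_eq_mul_inv]
        · rw [Set.indicator_of_notMem hEω, Set.indicator_of_notMem hEω, zero_mul]
      have hQ2 : (∫⁻ ω, (E.indicator (fun _ => ENNReal.ofReal (m ^ j)) ω) * g ω ∂P)
          = (ENNReal.ofReal (m ^ j) * P E) * ∫⁻ ω, g ω ∂P := by
        rw [lintegral_mul_eq_lintegral_mul_lintegral_of_independent_measurableSpace hGνle
          hGξle hIndep (measurable_const.indicator (hfibG j t)) hgG,
          lintegral_indicator_const (hfib j t)]
      have hYint : ∫⁻ ω, ENNReal.ofReal (Y ω) ∂P = ((t.card : ℕ) : ℝ≥0∞) * D' := by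
        calc ∫⁻ ω, ENNReal.ofReal (Y ω) ∂P
            = ∫⁻ ω, ∑ x ∈ t, ENNReal.ofReal ((ξ x ω)⁻¹) ∂P := by
              refine lintegral_congr_ae ?_
              filter_upwards [hξpos'] with ω hξω
              exact ENNReal.ofReal_sum_of_nonneg fun x _ => (inv_pos.2 (hξω x)).le
          _ = ∑ x ∈ t, ∫⁻ ω, ENNReal.ofReal ((ξ x ω)⁻¹) ∂P :=
              lintegral_finset_sum _ fun x _ => ((hmξ x).inv).ennreal_ofReal
          _ = ∑ _x ∈ t, D' := Finset.sum_congr rfl fun x _ => hxD x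
          _ = ((t.card : ℕ) : ℝ≥0∞) * D' := by rw [Finset.sum_const, nsmul_eq_mul]
      have hJ : (((t.card : ℕ) : ℝ≥0∞) * D')⁻¹ ≤ ∫⁻ ω, g ω ∂P := by
        rw [← hYint]
        exact lintegral_inv_ge P (hYmeas.ennreal_ofReal).aemeasurable
      have hq : (∫⁻ ω, E.indicator
            (fun ω => ENNReal.ofReal (((m ^ j)⁻¹ * (tcount ν j root ω : ℝ))⁻¹)) ω ∂P)
          = (ENNReal.ofReal (m ^ j) / ((t.card : ℕ) : ℝ≥0∞)) * P E := by
        have hcongr : ∀ ω, E.indicator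
            (fun ω => ENNReal.ofReal (((m ^ j)⁻¹ * (tcount ν j root ω : ℝ))⁻¹)) ω =
            E.indicator (fun _ => ENNReal.ofReal (m ^ j) / ((t.card : ℕ) : ℝ≥0∞)) ω := by
          intro ω
          by_cases hEω : ω ∈ E
          · rw [Set.indicator_of_mem hEω, Set.indicator_of_mem hEω]
            have htcount : (tcount ν j root ω : ℝ) = ((t.card : ℕ) : ℝ) := by
              rw [← card_desc, ← verts_eq_desc, show verts ν j ω = t from hEω]
            rw [htcount, mul_inv, inv_inv, ← div_eq_mul_inv,
              ENNReal.ofReal_div_of_pos hcardpos, ENNReal.ofReal_natCast]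
          · rw [Set.indicator_of_notMem hEω, Set.indicator_of_notMem hEω]
        rw [lintegral_congr hcongr, lintegral_indicator_const (hfib j t)]
      calc (∫⁻ ω, E.indicator
            (fun ω => ENNReal.ofReal (((m ^ j)⁻¹ * (tcount ν j root ω : ℝ))⁻¹)) ω ∂P) * D'⁻¹
          = ENNReal.ofReal (m ^ j) * P E * (((t.card : ℕ) : ℝ≥0∞) * D')⁻¹ := by
            rw [hq, ENNReal.mul_inv (Or.inl hcardE) (Or.inr hD'0), div_eq_mul_inv]
            ring
        _ ≤ ENNReal.ofReal (m ^ j) * P E * ∫⁻ ω, g ω ∂P := mul_le_mul_right hJ _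
        _ = _ := (hQ1.trans hQ2).symm
  -- Step III : Fatou for W
  set vB : ℕ → ℝ≥0∞ := fun k => Bj (k + 1) with hvB
  have fatou : (∫⁻ ω, ENNReal.ofReal ((W ω)⁻¹) ∂P) ≤ atTop.liminf vB := by
    have hptwise : ∀ᵐ ω ∂P, ENNReal.ofReal ((W ω)⁻¹) ≤ atTop.liminf fun k =>
        ENNReal.ofReal (((m ^ (k + 1))⁻¹ * (tcount ν (k + 1) root ω : ℝ))⁻¹) := by
      filter_upwards [hW] with ω hWω
      rcases le_or_gt (W ω) 0 with hW0 | hW0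
      · rw [ENNReal.ofReal_eq_zero.2 (inv_nonpos.2 hW0)]
        exact zero_le
      · have hT1 : Tendsto (fun k : ℕ => (m ^ (k + 1))⁻¹ * (tcount ν (k + 1) root ω : ℝ))
            atTop (𝓝 (W ω)) := hWω.comp (tendsto_add_atTop_nat 1)
        have hT2 : Tendsto (fun k : ℕ =>
            ENNReal.ofReal (((m ^ (k + 1))⁻¹ * (tcount ν (k + 1) root ω : ℝ))⁻¹))
            atTop (𝓝 (ENNReal.ofReal ((W ω)⁻¹))) :=
          (ENNReal.continuous_ofReal.tendsto _).comp (hT1.inv₀ hW0.ne')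
        exact le_of_eq hT2.liminf_eq.symm
    calc (∫⁻ ω, ENNReal.ofReal ((W ω)⁻¹) ∂P)
        ≤ ∫⁻ ω, atTop.liminf (fun k =>
            ENNReal.ofReal (((m ^ (k + 1))⁻¹ * (tcount ν (k + 1) root ω : ℝ))⁻¹)) ∂P :=
          lintegral_mono_ae hptwise
      _ ≤ atTop.liminf vB := lintegral_liminf_le fun k => hBmeas (k + 1)
  -- final chain
  rw [hDD]
  have final1 : (∫⁻ ω, ENNReal.ofReal ((W ω)⁻¹) ∂P) / D' ≤
      (atTop.liminf fun n : ℕ => (∑ k ∈ Finset.range n, vB k) / n) * D'⁻¹ := by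
    rw [div_eq_mul_inv]
    exact mul_le_mul_left (fatou.trans (cesaro_liminf vB)) _
  refine final1.trans ((liminf_mul_const_le _ _).trans ?_)
  refine liminf_le_liminf (Filter.Eventually.of_forall fun n => ?_)
  have h1 : (∑ k ∈ Finset.range n, vB k) * D'⁻¹ ≤
      ∫⁻ ω, ENNReal.ofReal ((gwCond m ν ξ n root ω)⁻¹) ∂P :=
    calc (∑ k ∈ Finset.range n, vB k) * D'⁻¹
        = ∑ k ∈ Finset.range n, Bj (k + 1) * D'⁻¹ := Finset.sum_mul _ _ _
      _ ≤ ∑ k ∈ Finset.range n, Tj (k + 1) := Finset.sum_le_sum fun k _ => stepII (k + 1)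
      _ ≤ _ := stepI n
  calc (∑ k ∈ Finset.range n, vB k) / (n : ℝ≥0∞) * D'⁻¹
      = ((∑ k ∈ Finset.range n, vB k) * D'⁻¹) / n := by
        rw [div_eq_mul_inv, div_eq_mul_inv, mul_right_comm]
    _ ≤ _ := ENNReal.div_le_div_right h1 _
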